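/- Let s : ℝ → ℝ be nowhere-zero and twice differentiable, μ ∈ ℝ, and α ≠ 0, β, ρ ∈ ℝ with ρ² = β² - 4α, ρ > 0. If y solves y'' + (3β s y² + 5 s'/(3s)) y' + 3α s² y⁵ + 2β s' y³ + 3μ y² + (2 s''/(3s)) y = 0, then I(z) = (6α s y' + 4α y s' + 3(β+ρ)(α s² y³ + μ))^{ρ+β} · (6α s y' + 4α y s' + 3(β-ρ)(α s² y³ + μ))^{ρ-β} is constant on any interval where both base expressions are positive. -/

import Mathlib

/-- Derivative of the auxiliary function `F_c = 6αs y' + 4α y s' + 3c(αs²y³+μ)`. -/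
lemma aux_hasDerivAt (α μ c : ℝ) (s y : ℝ → ℝ)
    (hs : Differentiable ℝ s) (hs' : Differentiable ℝ (deriv s))
    (hy : Differentiable ℝ y) (hy' : Differentiable ℝ (deriv y)) (z : ℝ) :
    HasDerivAt (fun z => 6 * α * s z * deriv y z + 4 * α * y z * deriv s z
        + 3 * c * (α * s z ^ 2 * y z ^ 3 + μ))
      (6 * α * (deriv s z * deriv y z + s z * deriv (deriv y) z)
        + 4 * α * (deriv y z * deriv s z + y z * deriv (deriv s) z)
        + 3 * c * (α * (2 * s z * deriv s z * y z ^ 3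
            + s z ^ 2 * (3 * y z ^ 2 * deriv y z)))) z := by
  have Hs := (hs z).hasDerivAt
  have Hs' := (hs' z).hasDerivAt
  have Hy := (hy z).hasDerivAt
  have Hy' := (hy' z).hasDerivAt
  have h1 : HasDerivAt (fun z => 6 * α * s z * deriv y z)
      (6 * α * (deriv s z * deriv y z + s z * deriv (deriv y) z)) z := by
    have := ((Hs.const_mul (6*α)).mul Hy')
    exact this.congr_deriv (by ring)
  have h2 : HasDerivAt (fun z => 4 * α * y z * deriv s z)
      (4 * α * (deriv y z * deriv s z + y z * deriv (deriv s) z)) z := by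
    have := ((Hy.const_mul (4*α)).mul Hs')
    exact this.congr_deriv (by ring)
  have h3 : HasDerivAt (fun z => 3 * c * (α * s z ^ 2 * y z ^ 3 + μ))
      (3 * c * (α * (2 * s z * deriv s z * y z ^ 3
        + s z ^ 2 * (3 * y z ^ 2 * deriv y z)))) z := by
    have hsq : HasDerivAt (fun z => s z ^ 2) (2 * s z * deriv s z) z := by
      have := Hs.pow 2; exact this.congr_deriv (by push_cast; ring)
    have hcb : HasDerivAt (fun z => y z ^ 3) (3 * y z ^ 2 * deriv y z) z := by
      have := Hy.pow 3; exact this.congr_deriv (by push_cast; ring)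
    have := (((hsq.const_mul α).mul hcb).add_const μ).const_mul (3*c)
    exact this.congr_deriv (by ring)
  exact (h1.add h2).add h3

theorem stmt_17 (α β ρ μ : ℝ) (hα : α ≠ 0) (hρ : ρ ^ 2 = β ^ 2 - 4 * α) (hρpos : 0 < ρ)
    (s : ℝ → ℝ) (hs : Differentiable ℝ s) (hs' : Differentiable ℝ (deriv s))
    (hsne : ∀ z : ℝ, s z ≠ 0)
    (y : ℝ → ℝ) (hy : Differentiable ℝ y) (hy' : Differentiable ℝ (deriv y))
    (heq : ∀ z : ℝ,
      deriv (deriv y) z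
        + (3 * β * s z * y z ^ 2 + 5 * deriv s z / (3 * s z)) * deriv y z
        + 3 * α * s z ^ 2 * y z ^ 5 + 2 * β * deriv s z * y z ^ 3 + 3 * μ * y z ^ 2
        + (2 * deriv (deriv s) z / (3 * s z)) * y z = 0)
    (a b : ℝ)
    (hpos : ∀ z ∈ Set.Ioo a b,
      0 < 6 * α * s z * deriv y z + 4 * α * y z * deriv s z
            + 3 * (β + ρ) * (α * s z ^ 2 * y z ^ 3 + μ) ∧
      0 < 6 * α * s z * deriv y z + 4 * α * y z * deriv s z
            + 3 * (β - ρ) * (α * s z ^ 2 * y z ^ 3 + μ)) :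
    ∀ x ∈ Set.Ioo a b, ∀ x' ∈ Set.Ioo a b,
      (6 * α * s x * deriv y x + 4 * α * y x * deriv s x
          + 3 * (β + ρ) * (α * s x ^ 2 * y x ^ 3 + μ)) ^ (ρ + β) *
        (6 * α * s x * deriv y x + 4 * α * y x * deriv s x
          + 3 * (β - ρ) * (α * s x ^ 2 * y x ^ 3 + μ)) ^ (ρ - β)
      = (6 * α * s x' * deriv y x' + 4 * α * y x' * deriv s x'
          + 3 * (β + ρ) * (α * s x' ^ 2 * y x' ^ 3 + μ)) ^ (ρ + β) *
        (6 * α * s x' * deriv y x' + 4 * α * y x' * deriv s x'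
          + 3 * (β - ρ) * (α * s x' ^ 2 * y x' ^ 3 + μ)) ^ (ρ - β) := by
  -- define F and G
  set F : ℝ → ℝ := fun z => 6 * α * s z * deriv y z + 4 * α * y z * deriv s z
      + 3 * (β + ρ) * (α * s z ^ 2 * y z ^ 3 + μ) with hF
  set G : ℝ → ℝ := fun z => 6 * α * s z * deriv y z + 4 * α * y z * deriv s z
      + 3 * (β - ρ) * (α * s z ^ 2 * y z ^ 3 + μ) with hG
  -- the derivatives satisfy F' = (3/2)(ρ-β) s y² F, G' = -(3/2)(ρ+β) s y² G
  have hFd : ∀ z : ℝ, HasDerivAt F ((3/2) * (ρ - β) * s z * y z ^ 2 * F z) z := by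
    intro z
    have H := aux_hasDerivAt α μ (β + ρ) s y hs hs' hy hy' z
    convert H using 1
    have he := heq z
    have hsz := hsne z
    field_simp at he
    linear_combination (-(2 : ℝ) * α) * he
      + ((9/2 : ℝ) * (α * s z ^ 3 * y z ^ 5 + μ * s z * y z ^ 2)) * hρ
  have hGd : ∀ z : ℝ, HasDerivAt G (-(3/2) * (ρ + β) * s z * y z ^ 2 * G z) z := by
    intro z
    have H := aux_hasDerivAt α μ (β - ρ) s y hs hs' hy hy' z
    convert H using 1
    have he := heq z
    have hsz := hsne z
    field_simp at he
    linear_combination (-(2 : ℝ) * α) * he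
      + ((9/2 : ℝ) * (α * s z ^ 3 * y z ^ 5 + μ * s z * y z ^ 2)) * hρ
  -- the logarithmic combination H
  set L : ℝ → ℝ := fun z => (ρ + β) * Real.log (F z) + (ρ - β) * Real.log (G z) with hL
  have hLd : ∀ x ∈ Set.Ioo a b, HasDerivAt L 0 x := by
    intro x hx
    obtain ⟨hFp, hGp⟩ := hpos x hx
    have h1 : HasDerivAt (fun z => Real.log (F z))
        (((3/2) * (ρ - β) * s x * y x ^ 2 * F x) / F x) x :=
      (hFd x).log (ne_of_gt hFp)
    have h2 : HasDerivAt (fun z => Real.log (G z))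
        ((-(3/2) * (ρ + β) * s x * y x ^ 2 * G x) / G x) x :=
      (hGd x).log (ne_of_gt hGp)
    have := (h1.const_mul (ρ + β)).add (h2.const_mul (ρ - β))
    refine this.congr_deriv ?_
    rw [mul_div_assoc, mul_div_assoc, div_self (ne_of_gt hFp), div_self (ne_of_gt hGp)]
    ring
  -- L is constant on Ioo a b
  have hLconst : ∀ x ∈ Set.Ioo a b, ∀ x' ∈ Set.Ioo a b, L x = L x' := by
    intro x hx x' hx'
    refine (convex_Ioo a b).is_const_of_fderivWithin_eq_zero
      (fun z hz => ((hLd z hz).differentiableAt).differentiableWithinAt)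
      (fun z hz => ?_) hx hx'
    rw [fderivWithin_eq_fderiv (isOpen_Ioo.uniqueDiffWithinAt hz) (hLd z hz).differentiableAt]
    have := (hLd z hz).deriv
    ext t
    simp [← toSpanSingleton_deriv, this]
  intro x hx x' hx'
  obtain ⟨hFx, hGx⟩ := hpos x hx
  obtain ⟨hFx', hGx'⟩ := hpos x' hx'
  have key := hLconst x hx x' hx'
  have e1 : ∀ z : ℝ, 0 < F z → 0 < G z →
      F z ^ (ρ + β) * G z ^ (ρ - β) = Real.exp (L z) := by
    intro z h1 h2
    rw [hL, Real.exp_add, Real.rpow_def_of_pos h1, Real.rpow_def_of_pos h2,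
      mul_comm (Real.log (F z)), mul_comm (Real.log (G z))]
  calc F x ^ (ρ + β) * G x ^ (ρ - β) = Real.exp (L x) := e1 x hFx hGx
    _ = Real.exp (L x') := by rw [key]
    _ = F x' ^ (ρ + β) * G x' ^ (ρ - β) := (e1 x' hFx' hGx').symm
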